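/- A finite set D of nonzero vectors in ℝⁿ has positive cosine measure if and only if every vector in ℝⁿ can be written as a nonnegative linear combination of vectors in D (i.e., D is a positive spanning set). -/

import Mathlib

local notation "⟪" x ", " y "⟫" => @inner ℝ _ _ x y

/-- The cosine measure of a finite set of directions:
`cm(D) = inf_{v ≠ 0} sup_{d ∈ D} ⟪d, v⟫ / (‖d‖ ‖v‖)`. -/
noncomputable def cosMeasure {n : ℕ} (D : Finset (EuclideanSpace ℝ (Fin n))) : ℝ :=
  ⨅ v : {v : EuclideanSpace ℝ (Fin n) // v ≠ 0},
    ⨆ d : D, ⟪(d : EuclideanSpace ℝ (Fin n)), (v : EuclideanSpace ℝ (Fin n))⟫ /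
      (‖(d : EuclideanSpace ℝ (Fin n))‖ * ‖(v : EuclideanSpace ℝ (Fin n))‖)

namespace CosMeasureAux

variable {n : ℕ}

lemma term_ge_neg_one (d v : EuclideanSpace ℝ (Fin n)) :
    -1 ≤ ⟪d, v⟫ / (‖d‖ * ‖v‖) := by
  rcases le_or_gt (‖d‖ * ‖v‖) 0 with h | h
  · have h0 : ‖d‖ * ‖v‖ = 0 := le_antisymm h (by positivity)
    rw [h0, div_zero]; norm_num
  · rw [le_div_iff₀ h]
    have := abs_le.1 (abs_real_inner_le_norm d v)
    linarith [this.1]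

set_option maxHeartbeats 1000000 in
lemma ciSup_eq_sup' (D : Finset (EuclideanSpace ℝ (Fin n))) (hne : D.Nonempty)
    (g : EuclideanSpace ℝ (Fin n) → ℝ) : (⨆ d : D, g d) = D.sup' hne g := by
  haveI : Nonempty ↥D := Finset.nonempty_coe_sort.mpr hne
  refine le_antisymm (ciSup_le fun d => Finset.le_sup' g d.2) ?_
  exact Finset.sup'_le _ _ fun d hd =>
    le_ciSup (f := fun d : ↥D => g ↑d) (Set.Finite.bddAbove (Set.finite_range _)) ⟨d, hd⟩

set_option maxHeartbeats 1000000 in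
lemma stepA (D : Finset (EuclideanSpace ℝ (Fin n)))
    (hne : D.Nonempty) (hcm : 0 < cosMeasure D) {v : EuclideanSpace ℝ (Fin n)} (hv : v ≠ 0) :
    ∃ d ∈ D, 0 < ⟪d, v⟫ := by
  haveI : Nonempty ↥D := Finset.nonempty_coe_sort.mpr hne
  haveI : Nonempty {v : EuclideanSpace ℝ (Fin n) // v ≠ 0} := ⟨⟨v, hv⟩⟩
  have hbdd : BddBelow (Set.range fun w : {v : EuclideanSpace ℝ (Fin n) // v ≠ 0} =>
      ⨆ d : D, ⟪(d : EuclideanSpace ℝ (Fin n)), (w : EuclideanSpace ℝ (Fin n))⟫ /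
        (‖(d : EuclideanSpace ℝ (Fin n))‖ * ‖(w : EuclideanSpace ℝ (Fin n))‖)) := by
    refine ⟨-1, ?_⟩
    rintro x ⟨w, rfl⟩
    dsimp only
    rw [ciSup_eq_sup' D hne (fun x => ⟪x, (w : EuclideanSpace ℝ (Fin n))⟫ /
      (‖x‖ * ‖(w : EuclideanSpace ℝ (Fin n))‖))]
    obtain ⟨d, hd⟩ := hne
    exact le_trans (term_ge_neg_one d w)
      (Finset.le_sup' (f := fun x => ⟪x, (w : EuclideanSpace ℝ (Fin n))⟫ /
        (‖x‖ * ‖(w : EuclideanSpace ℝ (Fin n))‖)) hd)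
  have hle : cosMeasure D ≤
      ⨆ d : D, ⟪(d : EuclideanSpace ℝ (Fin n)), v⟫ /
        (‖(d : EuclideanSpace ℝ (Fin n))‖ * ‖v‖) := by
    unfold cosMeasure
    exact ciInf_le hbdd ⟨v, hv⟩
  by_contra hcon
  push_neg at hcon
  have hsup : (⨆ d : D, ⟪(d : EuclideanSpace ℝ (Fin n)), v⟫ /
      (‖(d : EuclideanSpace ℝ (Fin n))‖ * ‖v‖)) ≤ 0 := by
    refine ciSup_le fun d => ?_
    exact div_nonpos_of_nonpos_of_nonneg (hcon d d.2) (by positivity)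
  linarith

set_option maxHeartbeats 1000000 in
lemma stepB (hn : 0 < n) (D : Finset (EuclideanSpace ℝ (Fin n)))
    (hP : ∀ v : EuclideanSpace ℝ (Fin n), v ≠ 0 → ∃ d ∈ D, 0 < ⟪d, v⟫) :
    ∀ v : EuclideanSpace ℝ (Fin n), ∃ c : EuclideanSpace ℝ (Fin n) → ℝ,
      (∀ d ∈ D, 0 ≤ c d) ∧ v = ∑ d ∈ D, c d • d := by
  haveI : Nonempty (Fin n) := Fin.pos_iff_nonempty.mp hn
  classical
  set S : Set (EuclideanSpace ℝ (Fin n)) :=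
    {x | ∃ c : EuclideanSpace ℝ (Fin n) → ℝ,
      (∀ d ∈ D, 0 ≤ c d) ∧ x = ∑ d ∈ D, c d • d} with hSdef
  intro v
  suffices h : v ∈ S from h
  have hS0 : (0 : EuclideanSpace ℝ (Fin n)) ∈ S := ⟨0, fun d _ => le_refl 0, by simp⟩
  have hsmul : ∀ t : ℝ, 0 ≤ t → ∀ x ∈ S, t • x ∈ S := by
    rintro t ht x ⟨c, hc, rfl⟩
    refine ⟨fun d => t * c d, fun d hd => mul_nonneg ht (hc d hd), ?_⟩
    rw [Finset.smul_sum]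
    exact Finset.sum_congr rfl fun d _ => by rw [smul_smul]
  have hadd : ∀ x ∈ S, ∀ y ∈ S, x + y ∈ S := by
    rintro x ⟨c₁, hc₁, rfl⟩ y ⟨c₂, hc₂, rfl⟩
    refine ⟨fun d => c₁ d + c₂ d, fun d hd => add_nonneg (hc₁ d hd) (hc₂ d hd), ?_⟩
    rw [← Finset.sum_add_distrib]
    exact Finset.sum_congr rfl fun d _ => by rw [add_smul]
  have hconv : Convex ℝ S := fun x hx y hy a b ha hb _ =>
    hadd _ (hsmul a ha x hx) _ (hsmul b hb y hy)
  have hDS : ∀ d₀ ∈ D, d₀ ∈ S := by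
    intro d₀ hd₀
    refine ⟨fun d => if d = d₀ then 1 else 0, fun d _ => by dsimp only; split <;> norm_num, ?_⟩
    rw [Finset.sum_congr rfl (fun d _ => show (if d = d₀ then (1:ℝ) else 0) • d
      = if d = d₀ then d₀ else 0 by split <;> simp_all)]
    rw [Finset.sum_ite_eq' D d₀ (fun _ => d₀)]
    simp [hd₀]
  have hspan : Submodule.span ℝ (↑D : Set (EuclideanSpace ℝ (Fin n))) = ⊤ := by
    by_contra hsp
    have hbot : (Submodule.span ℝ (↑D : Set (EuclideanSpace ℝ (Fin n))))ᗮ ≠ ⊥ := by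
      intro hb
      exact hsp (Submodule.orthogonal_eq_bot_iff.mp hb)
    obtain ⟨w, hwmem, hw0⟩ := Submodule.exists_mem_ne_zero_of_ne_bot hbot
    obtain ⟨d, hd, hdw⟩ := hP w hw0
    have hz : ⟪d, w⟫ = 0 :=
      (Submodule.mem_orthogonal _ w).mp hwmem d (Submodule.subset_span hd)
    linarith
  -- the linear map from coefficients
  let L : (↥D → ℝ) →ₗ[ℝ] EuclideanSpace ℝ (Fin n) :=
    { toFun := fun c => ∑ d : ↥D, c d • (d : EuclideanSpace ℝ (Fin n))
      map_add' := by intro a b; simp [add_smul, Finset.sum_add_distrib]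
      map_smul' := by intro t a; simp [Finset.smul_sum, smul_smul] }
  have hLsurj : Function.Surjective L := by
    rw [← LinearMap.range_eq_top, ← top_le_iff, ← hspan]
    refine Submodule.span_le.mpr ?_
    intro d hd
    refine ⟨fun e => if e = ⟨d, hd⟩ then 1 else 0, ?_⟩
    show (∑ e : ↥D, (if e = (⟨d, hd⟩ : ↥D) then (1:ℝ) else 0) • (e : EuclideanSpace ℝ (Fin n))) = d
    rw [Finset.sum_congr rfl (fun e _ => show (if e = (⟨d, hd⟩ : ↥D) then (1:ℝ) else 0) •
        (e : EuclideanSpace ℝ (Fin n)) = if e = (⟨d, hd⟩ : ↥D) then d else 0 by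
      split <;> simp_all)]
    rw [Finset.sum_ite_eq' Finset.univ (⟨d, hd⟩ : ↥D) (fun _ => d)]
    simp
  let L' : (↥D → ℝ) →L[ℝ] EuclideanSpace ℝ (Fin n) := LinearMap.toContinuousLinearMap L
  have hopen : IsOpenMap L' := ContinuousLinearMap.isOpenMap L' hLsurj
  let U : Set (↥D → ℝ) := {c | ∀ d, 0 < c d}
  have hUopen : IsOpen U := by
    have hU : U = Set.pi Set.univ fun _ : ↥D => Set.Ioi (0:ℝ) := by
      ext c; simp [U, Set.mem_pi]
    rw [hU]
    exact isOpen_set_pi Set.finite_univ fun i _ => isOpen_Ioi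
  have hLU_sub : L' '' U ⊆ S := by
    rintro x ⟨c, hc, rfl⟩
    refine ⟨fun y => if h : y ∈ D then c ⟨y, h⟩ else 0, ?_, ?_⟩
    · intro d hd; dsimp only; rw [dif_pos hd]; exact (hc ⟨d, hd⟩).le
    · show L' c = ∑ d ∈ D, (if h : d ∈ D then c ⟨d, h⟩ else 0) • d
      rw [← Finset.sum_attach D fun d => (if h : d ∈ D then c ⟨d, h⟩ else 0) • d]
      show (∑ e : ↥D, c e • (e : EuclideanSpace ℝ (Fin n))) = _
      rw [Finset.univ_eq_attach]
      refine Finset.sum_congr rfl fun e _ => ?_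
      rw [dif_pos e.2]
  have hint : (interior S).Nonempty := by
    have h1 : L' '' U ⊆ interior S := interior_maximal hLU_sub (hopen U hUopen)
    refine Set.Nonempty.mono h1 ?_
    exact ⟨L' (fun _ => 1), (fun _ => 1), fun d => one_pos, rfl⟩
  have hclos : ∀ x : EuclideanSpace ℝ (Fin n), x ∈ closure S := by
    intro x
    by_contra hx
    obtain ⟨f, u, hxu, hb⟩ :=
      geometric_hahn_banach_point_closed hconv.closure isClosed_closure hx
    have hu0 : u < 0 := by have := hb 0 (subset_closure hS0); simpa using this
    have hfd : ∀ d ∈ D, 0 ≤ f d := by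
      intro d hd
      by_contra hfdneg
      push_neg at hfdneg
      have ht0 : 0 ≤ u / f d := le_of_lt (div_pos_of_neg_of_neg hu0 hfdneg)
      have hlt : u < f ((u / f d) • d) :=
        hb _ (subset_closure (hsmul _ ht0 d (hDS d hd)))
      rw [map_smul, smul_eq_mul, div_mul_cancel₀ u (ne_of_lt hfdneg)] at hlt
      exact lt_irrefl u hlt
    set w := (InnerProductSpace.toDual ℝ (EuclideanSpace ℝ (Fin n))).symm f with hwdef
    have hwf : ∀ y, ⟪w, y⟫ = f y := fun y => InnerProductSpace.toDual_symm_apply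
    have hw0 : w ≠ 0 := by
      intro h0
      have hfx : f x = 0 := by rw [← hwf x, h0, inner_zero_left]
      linarith
    obtain ⟨d, hd, hdpos⟩ := hP (-w) (neg_ne_zero.mpr hw0)
    have hdle : ⟪d, -w⟫ ≤ 0 := by
      rw [inner_neg_right]
      have h2 : ⟪d, w⟫ = f d := by rw [real_inner_comm]; exact hwf d
      have := hfd d hd
      rw [h2]
      linarith
    linarith
  obtain ⟨x₀, hx₀⟩ := hint
  have h1 : (1/2 : ℝ) • x₀ + (1/2 : ℝ) • ((2:ℝ) • v - x₀) ∈ interior S :=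
    hconv.combo_interior_closure_mem_interior hx₀ (hclos _) (by norm_num) (by norm_num)
      (by norm_num)
  have h2 : (1/2 : ℝ) • x₀ + (1/2 : ℝ) • ((2:ℝ) • v - x₀) = v := by module
  rw [h2] at h1
  exact interior_subset h1

set_option maxHeartbeats 1000000 in
lemma stepD (hn : 0 < n) (D : Finset (EuclideanSpace ℝ (Fin n))) (hD0 : ∀ d ∈ D, d ≠ 0)
    (h : ∀ v : EuclideanSpace ℝ (Fin n), ∃ c : EuclideanSpace ℝ (Fin n) → ℝ,
      (∀ d ∈ D, 0 ≤ c d) ∧ v = ∑ d ∈ D, c d • d) : 0 < cosMeasure D := by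
  haveI : Nonempty (Fin n) := Fin.pos_iff_nonempty.mp hn
  obtain ⟨v₀, hv₀⟩ := exists_ne (0 : EuclideanSpace ℝ (Fin n))
  have hne : D.Nonempty := by
    rcases D.eq_empty_or_nonempty with rfl | hne
    · obtain ⟨c, -, hc⟩ := h v₀
      simp at hc
      exact absurd hc hv₀
    · exact hne
  haveI : Nonempty ↥D := Finset.nonempty_coe_sort.mpr hne
  have hGcont : Continuous fun v : EuclideanSpace ℝ (Fin n) =>
      D.sup' hne fun d => ⟪d, v⟫ / ‖d‖ :=
    Continuous.finset_sup'_apply hne fun d _ => (continuous_const.inner continuous_id).div_const _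
  have hsphne : (Metric.sphere (0 : EuclideanSpace ℝ (Fin n)) 1).Nonempty :=
    NormedSpace.sphere_nonempty.mpr zero_le_one
  obtain ⟨vm, hvmem, hmin⟩ := (isCompact_sphere (0 : EuclideanSpace ℝ (Fin n)) 1).exists_isMinOn
    hsphne hGcont.continuousOn
  have hvm1 : ‖vm‖ = 1 := by simpa using hvmem
  have hvm0 : vm ≠ 0 := by intro h0; rw [h0, norm_zero] at hvm1; norm_num at hvm1
  obtain ⟨c, hc0, hcsum⟩ := h vm
  have hinner : (1:ℝ) = ∑ d ∈ D, c d * ⟪d, vm⟫ := by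
    have h1 : ⟪vm, vm⟫ = 1 := by
      rw [real_inner_self_eq_norm_sq, hvm1]; norm_num
    calc (1:ℝ) = ⟪vm, vm⟫ := h1.symm
      _ = ⟪∑ d ∈ D, c d • d, vm⟫ := by rw [← hcsum]
      _ = ∑ d ∈ D, c d * ⟪d, vm⟫ := by
          rw [sum_inner]
          exact Finset.sum_congr rfl fun d _ => real_inner_smul_left d vm (c d)
  have hex : ∃ d ∈ D, 0 < ⟪d, vm⟫ := by
    by_contra hcon
    push_neg at hcon
    have hle : ∑ d ∈ D, c d * ⟪d, vm⟫ ≤ 0 :=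
      Finset.sum_nonpos fun d hd => mul_nonpos_of_nonneg_of_nonpos (hc0 d hd) (hcon d hd)
    linarith
  obtain ⟨d₀, hd₀, hd₀pos⟩ := hex
  have hm : 0 < D.sup' hne fun d => ⟪d, vm⟫ / ‖d‖ := by
    have h1 : 0 < ⟪d₀, vm⟫ / ‖d₀‖ := div_pos hd₀pos (norm_pos_iff.mpr (hD0 d₀ hd₀))
    exact lt_of_lt_of_le h1 (Finset.le_sup' (f := fun d => ⟪d, vm⟫ / ‖d‖) hd₀)
  haveI : Nonempty {v : EuclideanSpace ℝ (Fin n) // v ≠ 0} := ⟨⟨vm, hvm0⟩⟩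
  unfold cosMeasure
  refine lt_of_lt_of_le hm (le_ciInf ?_)
  rintro ⟨v, hv⟩
  have hvn : (0:ℝ) < ‖v‖ := norm_pos_iff.mpr hv
  have hunit : ‖v‖⁻¹ • v ∈ Metric.sphere (0 : EuclideanSpace ℝ (Fin n)) 1 := by
    simp [norm_smul, abs_of_pos (inv_pos.mpr hvn), inv_mul_cancel₀ (ne_of_gt hvn)]
  have heq : (⨆ d : D, ⟪(d : EuclideanSpace ℝ (Fin n)), v⟫ /
      (‖(d : EuclideanSpace ℝ (Fin n))‖ * ‖v‖))
      = D.sup' hne fun d => ⟪d, ‖v‖⁻¹ • v⟫ / ‖d‖ := by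
    rw [ciSup_eq_sup' D hne (fun x => ⟪x, v⟫ / (‖x‖ * ‖v‖))]
    refine Finset.sup'_congr hne rfl fun d _ => ?_
    rw [real_inner_smul_right]
    field_simp
  rw [heq]
  exact hmin hunit

end CosMeasureAux

set_option maxHeartbeats 1000000 in
/-- a finite set of nonzero vectors in ℝⁿ (n ≥ 1) has positive cosine
measure iff every vector is a nonnegative linear combination of its elements
(i.e. it is a positive spanning set). -/
theorem stmt2 {n : ℕ} (hn : 0 < n) (D : Finset (EuclideanSpace ℝ (Fin n)))
    (hD0 : ∀ d ∈ D, d ≠ 0) :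
    0 < cosMeasure D ↔
      ∀ v : EuclideanSpace ℝ (Fin n), ∃ c : EuclideanSpace ℝ (Fin n) → ℝ,
        (∀ d ∈ D, 0 ≤ c d) ∧ v = ∑ d ∈ D, c d • d := by
  haveI : Nonempty (Fin n) := Fin.pos_iff_nonempty.mp hn
  constructor
  · intro hcm
    have hne : D.Nonempty := by
      rcases D.eq_empty_or_nonempty with rfl | hne
      · exfalso
        obtain ⟨v₀, hv₀⟩ := exists_ne (0 : EuclideanSpace ℝ (Fin n))
        haveI : Nonempty {v : EuclideanSpace ℝ (Fin n) // v ≠ 0} := ⟨⟨v₀, hv₀⟩⟩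
        have hz : cosMeasure (∅ : Finset (EuclideanSpace ℝ (Fin n))) = 0 := by
          unfold cosMeasure
          have h1 : ∀ w : {v : EuclideanSpace ℝ (Fin n) // v ≠ 0},
              (⨆ d : (∅ : Finset (EuclideanSpace ℝ (Fin n))),
                ⟪(d : EuclideanSpace ℝ (Fin n)), (w : EuclideanSpace ℝ (Fin n))⟫ /
                (‖(d : EuclideanSpace ℝ (Fin n))‖ * ‖(w : EuclideanSpace ℝ (Fin n))‖)) = 0 :=
            fun w => Real.iSup_of_isEmpty _
          rw [iInf_congr h1]
          exact ciInf_const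
        rw [hz] at hcm
        exact lt_irrefl 0 hcm
      · exact hne
    exact CosMeasureAux.stepB hn D fun v hv => CosMeasureAux.stepA D hne hcm hv
  · exact CosMeasureAux.stepD hn D hD0
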